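/- arXiv:1212.4265 — 3 statements merged into one kernel-verified Lean document; each statement's English description precedes it below -/
import Mathlib

section
/- Let {m_j} be a sequence of positive reals with m_0 = 1 such that ∑_{j≥1} m_{j-1}/(j·m_j) = ∞. Define α_j = m_j/m_{j-1}, μ_j = ∑_{k=1}^j 1/(k·α_k), and β_j = α_j·√(μ_j). Then the series ∑_{j≥1} 1/(j·β_j) diverges. -/
open Filter Finset

lemma sqrt_tendsto_atTop' : Tendsto Real.sqrt atTop atTop := by
  apply tendsto_atTop_atTop.2
  intro b
  refine ⟨(max b 0) ^ 2, fun x hx => (le_max_left b 0).trans ?_⟩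
  rw [← Real.sqrt_sq (le_max_right b 0)]
  exact Real.sqrt_le_sqrt hx

/-- If `∑ m_{j-1}/(j m_j) = ∞`, then with `α_j = m_j/m_{j-1}`,
`μ_j = ∑_{k=1}^j 1/(k α_k)` and `β_j = α_j √(μ_j)`, the series
`∑ 1/(j β_j)` also diverges. (Indices shifted: `j = J+1`, `k = K+1`.) -/
theorem stmt1 (m : ℕ → ℝ) (hpos : ∀ j, 0 < m j) (h0 : m 0 = 1)
    (hdiv : ¬ Summable (fun j : ℕ => m j / ((j + 1 : ℝ) * m (j + 1)))) :
    ¬ Summable (fun j : ℕ =>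
      1 / ((j + 1 : ℝ) *
        ((m (j + 1) / m j) *
          Real.sqrt (∑ k ∈ Finset.range (j + 1),
            1 / ((k + 1 : ℝ) * (m (k + 1) / m k)))))) := by
  set a : ℕ → ℝ := fun j => m j / ((j + 1 : ℝ) * m (j + 1)) with ha
  have hapos : ∀ j, 0 < a j := fun j => div_pos (hpos j) (mul_pos (by positivity) (hpos (j + 1)))
  set T : ℕ → ℝ := fun n => ∑ j ∈ Finset.range n, a j with hT
  have hTmono : Monotone T := fun i j hij =>
    Finset.sum_le_sum_of_subset_of_nonneg (Finset.range_subset_range.2 hij)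
      (fun k _ _ => (hapos k).le)
  have hTpos : ∀ n, 0 < T (n + 1) := fun n =>
    Finset.sum_pos (fun k _ => hapos k) ⟨0, Finset.mem_range.2 (Nat.succ_pos n)⟩
  have hTtop : Tendsto T atTop atTop := by
    rwa [← not_summable_iff_tendsto_nat_atTop_of_nonneg (fun j => (hapos j).le)]
  have h1 : ∀ k : ℕ, 1 / ((k + 1 : ℝ) * (m (k + 1) / m k)) = a k := by
    intro k
    have hk := (hpos k).ne'
    have hk1 := (hpos (k + 1)).ne'
    rw [ha]
    field_simp
  have hkey : ∀ j : ℕ, 1 / ((j + 1 : ℝ) *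
      ((m (j + 1) / m j) * Real.sqrt (∑ k ∈ Finset.range (j + 1),
        1 / ((k + 1 : ℝ) * (m (k + 1) / m k))))) = a j / Real.sqrt (T (j + 1)) := by
    intro j
    rw [Finset.sum_congr rfl (fun k _ => h1 k)]
    have hj := (hpos j).ne'
    have hj1 := (hpos (j + 1)).ne'
    have hs : (0 : ℝ) < Real.sqrt (T (j + 1)) := Real.sqrt_pos.2 (hTpos j)
    rw [ha]
    field_simp
    exact div_self hs.ne'
  rw [show (fun j : ℕ => 1 / ((j + 1 : ℝ) *
        ((m (j + 1) / m j) * Real.sqrt (∑ k ∈ Finset.range (j + 1),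
          1 / ((k + 1 : ℝ) * (m (k + 1) / m k)))))) =
      fun j => a j / Real.sqrt (T (j + 1)) from funext hkey]
  rw [not_summable_iff_tendsto_nat_atTop_of_nonneg
    (fun j => div_nonneg (hapos j).le (Real.sqrt_nonneg _))]
  have hlow : ∀ n : ℕ, Real.sqrt (T n) ≤ ∑ j ∈ Finset.range n, a j / Real.sqrt (T (j + 1)) := by
    intro n
    rcases Nat.eq_zero_or_pos n with rfl | hn
    · simp [hT]
    have hTn : 0 < T n := by
      obtain ⟨n', rfl⟩ := Nat.exists_eq_succ_of_ne_zero hn.ne'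
      exact hTpos n'
    have hsn : 0 < Real.sqrt (T n) := Real.sqrt_pos.2 hTn
    calc Real.sqrt (T n) = T n / Real.sqrt (T n) := (Real.div_sqrt).symm
      _ = ∑ j ∈ Finset.range n, a j / Real.sqrt (T n) := by
          rw [hT, Finset.sum_div]
      _ ≤ ∑ j ∈ Finset.range n, a j / Real.sqrt (T (j + 1)) := by
          refine Finset.sum_le_sum fun j hj => ?_
          have h1 : (0:ℝ) < Real.sqrt (T (j + 1)) := Real.sqrt_pos.2 (hTpos j)
          have h2 : Real.sqrt (T (j + 1)) ≤ Real.sqrt (T n) :=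
            Real.sqrt_le_sqrt (hTmono (Finset.mem_range.1 hj))
          gcongr
          exact (hapos j).le
  exact tendsto_atTop_mono hlow ((sqrt_tendsto_atTop').comp hTtop)
end

section
/- Let {m_j} be a sequence of positive reals with m_0 = 1 satisfying ∑_{j≥1} m_{j-1}/(j·m_j) = ∞. Then there exists a sequence {m̃_j} of positive reals with m̃_0 = 1 such that: (a) ∑_{j≥1} m̃_{j-1}/(j·m̃_j) = ∞; (b) lim_{j→∞} (m̃_j/m_j)^{1/j} = ∞; and (c) sup_{j≥1} (m_j/m̃_j)^{1/j} < ∞. -/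
open Filter Finset

private lemma cesaro_atTop {u : ℕ → ℝ} (hu : ∀ i, 0 ≤ u i)
    (h : Tendsto u atTop atTop) :
    Tendsto (fun n : ℕ => (∑ i ∈ range n, u i) / n) atTop atTop := by
  rw [tendsto_atTop]
  intro b
  set c : ℝ := max b 0 with hc
  obtain ⟨N, hN⟩ := eventually_atTop.1 ((tendsto_atTop.1 h) (2 * c + 1))
  filter_upwards [eventually_ge_atTop (2 * N + 1)] with n hn
  have hn1 : 1 ≤ n := le_trans (Nat.le_add_left 1 (2 * N)) hn
  have hNn : N ≤ n := by omega
  have hsum : ∑ i ∈ Finset.Ico N n, (2 * c + 1) ≤ ∑ i ∈ Finset.Ico N n, u i :=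
    Finset.sum_le_sum fun i hi => hN i (Finset.mem_Ico.1 hi).1
  have hsum2 : ∑ i ∈ Finset.Ico N n, u i ≤ ∑ i ∈ range n, u i := by
    rw [Finset.range_eq_Ico]
    exact Finset.sum_le_sum_of_subset_of_nonneg
      (Finset.Ico_subset_Ico (Nat.zero_le _) le_rfl) (fun i _ _ => hu i)
  have hcard : ((n - N : ℕ) : ℝ) * (2 * c + 1) ≤ ∑ i ∈ range n, u i := by
    calc ((n - N : ℕ) : ℝ) * (2 * c + 1)
        = ∑ i ∈ Finset.Ico N n, (2 * c + 1) := by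
          rw [Finset.sum_const, Nat.card_Ico, nsmul_eq_mul]
      _ ≤ _ := le_trans hsum hsum2
  have hnpos : (0 : ℝ) < n := by exact_mod_cast hn1
  rw [le_div_iff₀ hnpos]
  have h1 : b * n ≤ c * n := by
    apply mul_le_mul_of_nonneg_right (le_max_left _ _) hnpos.le
  refine le_trans h1 (le_trans ?_ hcard)
  have hnN : (n : ℝ) ≤ 2 * ((n - N : ℕ) : ℝ) := by
    have : n ≤ 2 * (n - N) := by omega
    exact_mod_cast this
  have hc0 : 0 ≤ c := le_max_right _ _
  calc c * n ≤ c * (2 * ((n - N : ℕ) : ℝ)) := mul_le_mul_of_nonneg_left hnN hc0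
    _ = ((n - N : ℕ) : ℝ) * (2 * c) := by ring
    _ ≤ ((n - N : ℕ) : ℝ) * (2 * c + 1) := by
        apply mul_le_mul_of_nonneg_left (by linarith) (Nat.cast_nonneg _)

/-- Lemma 3.1: for every quasi-analytic sequence `m` there is a quasi-analytic
sequence `mt` with `(mt j / m j)^(1/j) → ∞` and `sup_j (m j / mt j)^(1/j) < ∞`. -/
theorem stmt2 (m : ℕ → ℝ) (hpos : ∀ j, 0 < m j) (h0 : m 0 = 1)
    (hdiv : ¬ Summable (fun j : ℕ => m j / ((j + 1 : ℝ) * m (j + 1)))) :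
    ∃ mt : ℕ → ℝ, (∀ j, 0 < mt j) ∧ mt 0 = 1 ∧
      (¬ Summable (fun j : ℕ => mt j / ((j + 1 : ℝ) * mt (j + 1)))) ∧
      Tendsto (fun j : ℕ => (mt j / m j) ^ ((1 : ℝ) / j)) atTop atTop ∧
      (∃ C : ℝ, ∀ j : ℕ, 1 ≤ j → (m j / mt j) ^ ((1 : ℝ) / j) ≤ C) := by
  set a : ℕ → ℝ := fun j => m j / ((j + 1 : ℝ) * m (j + 1)) with ha
  have hapos : ∀ j, 0 < a j := fun j =>
    div_pos (hpos j) (mul_pos (by positivity) (hpos (j + 1)))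
  set S : ℕ → ℝ := fun n => ∑ i ∈ range n, a i with hS
  have hSnonneg : ∀ n, 0 ≤ S n := fun n => Finset.sum_nonneg fun i _ => (hapos i).le
  have hStop : Tendsto S atTop atTop := by
    have := (not_summable_iff_tendsto_nat_atTop_of_nonneg
      (fun j => (hapos j).le)).1 hdiv
    exact this
  set lam : ℕ → ℝ := fun n => ∏ i ∈ range n, (1 + S i) with hlam
  have h1S : ∀ i, (1 : ℝ) ≤ 1 + S i := fun i => le_add_of_nonneg_right (hSnonneg i)
  have hlamsucc : ∀ n, lam (n + 1) = lam n * (1 + S n) := fun n =>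
    Finset.prod_range_succ _ n
  have hlam1 : ∀ n, (1 : ℝ) ≤ lam n := by
    intro n
    induction n with
    | zero => simp [hlam]
    | succ n ih => rw [hlamsucc n]; nlinarith [h1S n]
  have hlampos : ∀ n, 0 < lam n := fun n => lt_of_lt_of_le one_pos (hlam1 n)
  refine ⟨fun j => m j * lam j, fun j => mul_pos (hpos j) (hlampos j), by
    simp [hlam, h0], ?_, ?_, ⟨1, ?_⟩⟩
  · -- divergence
    have hterm : ∀ j : ℕ, (m j * lam j) / ((j + 1 : ℝ) * (m (j + 1) * lam (j + 1)))
        = a j / (1 + S j) := by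
      intro j
      rw [hlamsucc j]
      have h1 : lam j ≠ 0 := ne_of_gt (hlampos j)
      have h2 : (1 + S j) ≠ 0 := ne_of_gt (lt_of_lt_of_le one_pos (h1S j))
      have h3 : m (j + 1) ≠ 0 := ne_of_gt (hpos (j + 1))
      have h4 : ((j : ℝ) + 1) ≠ 0 := by positivity
      rw [ha]
      field_simp
    rw [show (fun j : ℕ => m j * lam j / ((j + 1 : ℝ) * (m (j + 1) * lam (j + 1))))
        = fun j => a j / (1 + S j) from funext hterm]
    rw [not_summable_iff_tendsto_nat_atTop_of_nonneg
      (fun j => div_nonneg (hapos j).le (le_trans zero_le_one (h1S j)))]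
    have key : ∀ n, Real.log (1 + S n) ≤ ∑ i ∈ range n, a i / (1 + S i) := by
      intro n
      induction n with
      | zero => simp [hS]
      | succ n ih =>
        rw [Finset.sum_range_succ]
        have hpos1 : (0 : ℝ) < 1 + S n := lt_of_lt_of_le one_pos (h1S n)
        have hpos2 : (0 : ℝ) < 1 + S (n + 1) := lt_of_lt_of_le one_pos (h1S (n + 1))
        have hlog : Real.log (1 + S (n + 1)) - Real.log (1 + S n)
            ≤ a n / (1 + S n) := by
          rw [← Real.log_div (ne_of_gt hpos2) (ne_of_gt hpos1)]
          have := Real.log_le_sub_one_of_pos (div_pos hpos2 hpos1)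
          have heq : (1 + S (n + 1)) / (1 + S n) - 1 = a n / (1 + S n) := by
            have : S (n + 1) = S n + a n := Finset.sum_range_succ a n
            field_simp [this]
            linarith
          linarith [this, heq ▸ this]
        linarith
    refine tendsto_atTop_mono key ?_
    exact (Real.tendsto_log_atTop.comp (tendsto_atTop_add_const_left _ 1 hStop))
  · -- tendsto (lam j)^(1/j) atTop
    have heq : ∀ j : ℕ, (m j * lam j / m j) ^ ((1 : ℝ) / j)
        = Real.exp ((∑ i ∈ range j, Real.log (1 + S i)) / j) := by
      intro j
      have hmm : m j * lam j / m j = lam j := by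
        rw [mul_comm, mul_div_assoc, div_self (ne_of_gt (hpos j)), mul_one]
      have hlog : Real.log (lam j) = ∑ i ∈ range j, Real.log (1 + S i) := by
        simp only [hlam]
        exact Real.log_prod (fun i _ => ne_of_gt (lt_of_lt_of_le one_pos (h1S i)))
      rw [hmm, ← Real.exp_log (hlampos j), ← Real.exp_mul, hlog, mul_one_div]
    rw [show (fun j : ℕ => (m j * lam j / m j) ^ ((1 : ℝ) / j))
        = fun j => Real.exp ((∑ i ∈ range j, Real.log (1 + S i)) / j) from funext heq]
    refine Real.tendsto_exp_atTop.comp ?_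
    refine cesaro_atTop (fun i => Real.log_nonneg (h1S i)) ?_
    exact Real.tendsto_log_atTop.comp (tendsto_atTop_add_const_left _ 1 hStop)
  · -- bound by 1
    intro j hj
    have hle : m j / (m j * lam j) ≤ 1 := by
      rw [div_le_one (mul_pos (hpos j) (hlampos j))]
      nlinarith [hlam1 j, hpos j]
    have h0' : 0 ≤ m j / (m j * lam j) :=
      le_of_lt (div_pos (hpos j) (mul_pos (hpos j) (hlampos j)))
    calc (m j / (m j * lam j)) ^ ((1 : ℝ) / j)
        ≤ 1 := Real.rpow_le_one h0' hle (by positivity)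
end

section
/- Let b_n > 0 with b_n → ∞ and b_n nondecreasing, let y_n > 0 satisfy y_n^{-1} ∈ [b_n, b_{n+1}], and define m̃_n = ∏_{k=1}^n b_k and φ̃(ξ) = sup_{t≥1} ξ^{t+1}/m̃_t. Then for every n, (y_n^{-1})^{n+1}/φ̃(y_n^{-1}) = m̃_n; consequently, the function g_n(x) = A_n/(2^n(z_n − x)) with A_n = 1/φ̃(y_n^{-1}) and z_n = x_n + i y_n satisfies |g_n^{(n)}(x_n)| = 2^{-n}·n!·m̃_n. -/
open Filter Finset Complex

lemma stmt18_deriv (z c : ℂ) (hz : ∀ x : ℝ, z - (x : ℂ) ≠ 0) :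
    ∀ (n : ℕ) (x : ℝ), iteratedDeriv n (fun x : ℝ => c / (z - (x : ℂ))) x
      = c * n.factorial / (z - (x : ℂ)) ^ (n + 1) := by
  intro n
  induction n with
  | zero => intro x; simp
  | succ n ih =>
    intro x
    rw [iteratedDeriv_succ, funext ih]
    have h1 : HasDerivAt (fun x : ℝ => z - (x : ℂ)) (-1) x := by
      simpa using (Complex.ofRealCLM.hasDerivAt (x := x)).const_sub z
    have hpow := hasDerivAt_pow (n + 1) (z - (x : ℂ))
    have h2 : HasDerivAt (fun x : ℝ => (z - (x : ℂ)) ^ (n + 1))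
        ((((n : ℂ) + 1) * (z - (x : ℂ)) ^ n) * (-1)) x := by
      have := hpow.comp x h1
      simpa [Function.comp_def] using this
    have h3 := (hasDerivAt_const x (c * (n.factorial : ℂ))).div h2 (pow_ne_zero _ (hz x))
    rw [show deriv (fun x : ℝ => c * (n.factorial : ℂ) / (z - (x : ℂ)) ^ (n + 1)) x = _ from h3.deriv]
    have hzx := hz x
    rw [Nat.factorial_succ]
    push_cast
    field_simp
    ring
open Filter Finset Complex

lemma stmt18_sup (b : ℕ → ℝ) (hb : ∀ k, 0 < b k) (hbmono : Monotone b) (ξ : ℝ) (N : ℕ)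
    (h1 : b (N + 1) ≤ ξ) (h2 : ξ ≤ b (N + 2)) :
    (⨆ t : ℕ, ξ ^ (t + 2) / ∏ k ∈ Finset.Icc 1 (t + 1), b k)
      = ξ ^ (N + 2) / ∏ k ∈ Finset.Icc 1 (N + 1), b k := by
  have hξ : 0 < ξ := lt_of_lt_of_le (hb _) h1
  have hP : ∀ m : ℕ, 0 < ∏ k ∈ Finset.Icc 1 m, b k :=
    fun m => Finset.prod_pos fun k _ => hb k
  set f : ℕ → ℝ := fun t => ξ ^ (t + 2) / ∏ k ∈ Finset.Icc 1 (t + 1), b k with hf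
  have hfpos : ∀ t, 0 < f t := fun t => div_pos (pow_pos hξ _) (hP _)
  have step : ∀ t : ℕ, f (t + 1) = f t * (ξ / b (t + 2)) := by
    intro t
    simp only [hf]
    rw [Finset.prod_Icc_succ_top (by omega : 1 ≤ t + 2)]
    have := (hP (t + 1)).ne'
    have := (hb (t + 2)).ne'
    field_simp
    ring
  have up : ∀ t : ℕ, t ≤ N → f t ≤ f N := by
    intro t ht
    have key : ∀ d : ℕ, t + d ≤ N → f t ≤ f (t + d) := by
      intro d
      induction d with
      | zero => intro _; simp
      | succ d ih =>
        intro hd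
        have h' : f (t + d) ≤ f (t + d + 1) := by
          rw [step (t + d)]
          refine le_mul_of_one_le_right (hfpos _).le ?_
          rw [one_le_div (hb _)]
          exact (hbmono (by omega : t + d + 2 ≤ N + 1)).trans h1
        exact (ih (by omega)).trans h'
    have := key (N - t) (by omega)
    rwa [Nat.add_sub_cancel' ht] at this
  have down : ∀ t : ℕ, N ≤ t → f t ≤ f N := by
    intro t ht
    have key : ∀ d : ℕ, f (N + d) ≤ f N := by
      intro d
      induction d with
      | zero => simp
      | succ d ih =>
        have h' : f (N + d + 1) ≤ f (N + d) := by
          rw [step (N + d)]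
          refine mul_le_of_le_one_right (hfpos _).le ?_
          rw [div_le_one (hb _)]
          exact h2.trans (hbmono (by omega : N + 2 ≤ N + d + 2))
        exact h'.trans ih
    have := key (t - N)
    rwa [Nat.add_sub_cancel' ht] at this
  have bound : ∀ t, f t ≤ f N := fun t =>
    (le_or_gt t N).elim (up t) fun h => down t h.le
  exact le_antisymm (ciSup_le bound)
    (le_ciSup ⟨f N, by rintro _ ⟨t, rfl⟩; exact bound t⟩ N)

/-- Step 4: with `m̃_n = ∏_{k=1}^n b_k`, `φ̃(ξ) = sup_{t ≥ 1} ξ^{t+1}/m̃_t`,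
and `y_n⁻¹ ∈ [b_n, b_{n+1}]`, one has `(y_n⁻¹)^{n+1}/φ̃(y_n⁻¹) = m̃_n`;
consequently the building block `g_n(x) = A_n/(2^n(z_n − x))` with
`A_n = 1/φ̃(y_n⁻¹)` and `z_n = x_n + i y_n` satisfies
`|g_n^{(n)}(x_n)| = 2^{-n} n! m̃_n`. -/
theorem stmt18 (b xs ys : ℕ → ℝ) (hb : ∀ k, 0 < b k) (hbmono : Monotone b)
    (hbtop : Tendsto b atTop atTop)
    (hy : ∀ n, 0 < ys n)
    (hmem : ∀ n : ℕ, (ys n)⁻¹ ∈ Set.Icc (b n) (b (n + 1))) :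
    ∀ n : ℕ, 1 ≤ n →
      ((ys n)⁻¹) ^ (n + 1) /
          (⨆ t : ℕ, ((ys n)⁻¹) ^ (t + 2) / ∏ k ∈ Finset.Icc 1 (t + 1), b k)
        = ∏ k ∈ Finset.Icc 1 n, b k ∧
      ‖iteratedDeriv n
          (fun x : ℝ =>
            (((⨆ t : ℕ, ((ys n)⁻¹) ^ (t + 2) / ∏ k ∈ Finset.Icc 1 (t + 1), b k)⁻¹ : ℝ) : ℂ) /
              ((2 : ℂ) ^ n * (((xs n : ℂ) + (ys n : ℂ) * Complex.I) - ((x : ℝ) : ℂ))))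
          (xs n)‖
        = ((2 : ℝ) ^ n)⁻¹ * (Nat.factorial n : ℝ) * ∏ k ∈ Finset.Icc 1 n, b k := by
  intro n hn
  obtain ⟨N, rfl⟩ : ∃ N, n = N + 1 := ⟨n - 1, by omega⟩
  have hyp := hy (N + 1)
  have hys : ys (N + 1) ≠ 0 := hyp.ne'
  obtain ⟨hm1, hm2⟩ := hmem (N + 1)
  set ξ : ℝ := (ys (N + 1))⁻¹ with hξdef
  set S : ℝ := ⨆ t : ℕ, ξ ^ (t + 2) / ∏ k ∈ Finset.Icc 1 (t + 1), b k with hSdef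
  set P : ℝ := ∏ k ∈ Finset.Icc 1 (N + 1), b k with hPdef
  have hPpos : 0 < P := Finset.prod_pos fun k _ => hb k
  have hξpos : 0 < ξ := lt_of_lt_of_le (hb _) hm1
  have hS : S = ξ ^ (N + 2) / P := stmt18_sup b hb hbmono ξ N hm1 hm2
  have hSpos : 0 < S := hS ▸ div_pos (pow_pos hξpos _) hPpos
  have part1 : ξ ^ (N + 1 + 1) / S = P := by
    rw [hS]
    field_simp
  refine ⟨part1, ?_⟩
  set z : ℂ := (xs (N + 1) : ℂ) + (ys (N + 1) : ℂ) * Complex.I with hzdef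
  have hz : ∀ x : ℝ, z - (x : ℂ) ≠ 0 := by
    intro x h
    have him := congrArg Complex.im h
    simp [hzdef] at him
    exact hys him
  have hfun : (fun x : ℝ =>
      ((S⁻¹ : ℝ) : ℂ) / ((2 : ℂ) ^ (N + 1) * (z - ((x : ℝ) : ℂ))))
      = fun x : ℝ => (((S⁻¹ : ℝ) : ℂ) / (2 : ℂ) ^ (N + 1)) / (z - ((x : ℝ) : ℂ)) := by
    funext x
    rw [div_div]
  rw [hfun, stmt18_deriv z _ hz (N + 1) (xs (N + 1))]
  have hzx : z - ((xs (N + 1) : ℝ) : ℂ) = (ys (N + 1) : ℂ) * Complex.I := by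
    rw [hzdef]; ring
  rw [hzx]
  have h2n : ‖(2 : ℂ)‖ = (2 : ℝ) := by simp
  simp only [norm_div, norm_mul, norm_pow, Complex.norm_real, Complex.norm_natCast,
    Complex.norm_I, Real.norm_eq_abs, mul_one, h2n]
  rw [abs_of_pos (inv_pos.mpr hSpos), abs_of_pos hyp]
  -- goal: S⁻¹ / 2^(N+1) * (N+1)! / ys^(N+2) = (2^(N+1))⁻¹ * (N+1)! * P
  rw [← part1, hξdef]
  have h2 : (0 : ℝ) < 2 ^ (N + 1) := by positivity
  field_simp
  ring_nf
  have hy' : ys (1 + N) ≠ 0 := (hy _).ne'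
  rw [inv_pow, inv_pow]
  field_simp
end
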